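/- For the cooperative communication matrix C with 0 < η ≤ (N−1)/N strict, the iterates C^k x converge to the consensus vector x̄·(1,…,1) as k → ∞, for every x ∈ ℝ^N. -/
import Mathlib

theorem coop_convergence_to_consensus (N : ℕ) (hN : 2 ≤ N) (η : ℝ)
    (hη0 : 0 < η) (hη1 : η ≤ ((N : ℝ) - 1) / N)
    (C : Matrix (Fin N) (Fin N) ℝ)
    (hC : ∀ i j, C i j = if i = j then 1 - η else η / ((N : ℝ) - 1))
    (x : Fin N → ℝ) :
    Filter.Tendsto (fun k : ℕ => (C ^ k).mulVec x) Filter.atTop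
      (nhds (fun _ => (1 / (N : ℝ)) * ∑ i, x i)) := by
  have hN1 : (1:ℝ) ≤ (N:ℝ) - 1 := by
    have : (2:ℝ) ≤ (N:ℝ) := by exact_mod_cast hN
    linarith
  have hNm1 : (0:ℝ) < (N:ℝ) - 1 := by linarith
  have hNpos : (0:ℝ) < (N:ℝ) := by linarith
  set c : ℝ := (1 / (N : ℝ)) * ∑ i, x i with hc
  set lam : ℝ := 1 - η * N / ((N:ℝ) - 1) with hlam
  -- key step lemma
  have hstep : ∀ (z : Fin N → ℝ) (i : Fin N),
      C.mulVec z i = (1 - η) * z i + η / ((N:ℝ) - 1) * ((∑ j, z j) - z i) := by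
    intro z i
    simp only [Matrix.mulVec, dotProduct, hC, ite_mul]
    have h2 : ∀ j, (if i = j then (1 - η) * z j else η / ((N:ℝ) - 1) * z j)
        = η / ((N:ℝ) - 1) * z j + (if i = j then (1 - η - η / ((N:ℝ) - 1)) * z j else 0) := by
      intro j
      by_cases h : i = j <;> simp [h] <;> ring
    rw [Finset.sum_congr rfl (fun j _ => h2 j), Finset.sum_add_distrib,
      Finset.sum_ite_eq (Finset.univ) i (fun j => (1 - η - η / ((N:ℝ) - 1)) * z j)]
    simp [← Finset.mul_sum]
    ring
  -- closed form for iterates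
  have hform : ∀ k : ℕ, (C ^ k).mulVec x = fun i => lam ^ k * (x i - c) + c := by
    intro k
    induction k with
    | zero => funext i; simp
    | succ k ih =>
      funext i
      have : (C ^ (k+1)).mulVec x = C.mulVec ((C ^ k).mulVec x) := by
        rw [pow_succ', ← Matrix.mulVec_mulVec]
      rw [this, ih, hstep]
      have hsum : (∑ j, (lam ^ k * (x j - c) + c)) = ∑ j, x j := by
        rw [Finset.sum_add_distrib, ← Finset.mul_sum, Finset.sum_sub_distrib]
        have : ∑ _j : Fin N, c = N * c := by
          simp [Finset.sum_const, mul_comm]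
        rw [this]
        have hNc : (N:ℝ) * c = ∑ j, x j := by
          rw [hc]; field_simp
        rw [hNc]
        ring
      rw [hsum]
      have hNc : (N:ℝ) * c = ∑ j, x j := by
        rw [hc]; field_simp
      have : (∑ j, x j) - (lam ^ k * (x i - c) + c) = lam ^ k * (c - x i) + ((N:ℝ) - 1) * c := by
        rw [← hNc]; ring
      rw [this]
      have hlamval : lam = 1 - η - η / ((N:ℝ) - 1) := by
        rw [hlam]; field_simp; ring
      rw [pow_succ, hlamval]
      have h1 : ((N:ℝ) - 1) ≠ 0 := hNm1.ne'
      field_simp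
      ring
  -- convergence
  have hlam0 : 0 ≤ lam := by
    rw [hlam]
    have h1 : η * N ≤ (N:ℝ) - 1 := by
      have := (le_div_iff₀ hNpos).mp hη1
      linarith
    have : η * N / ((N:ℝ) - 1) ≤ 1 := (div_le_one hNm1).mpr h1
    linarith
  have hlam1 : lam < 1 := by
    rw [hlam]
    have : 0 < η * N / ((N:ℝ) - 1) := by positivity
    linarith
  have hpow : Filter.Tendsto (fun k : ℕ => lam ^ k) Filter.atTop (nhds 0) := by
    apply tendsto_pow_atTop_nhds_zero_of_lt_one hlam0 hlam1
  rw [Filter.tendsto_congr (fun k => hform k)]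
  rw [tendsto_pi_nhds]
  intro i
  have : Filter.Tendsto (fun k : ℕ => lam ^ k * (x i - c) + c) Filter.atTop
      (nhds (0 * (x i - c) + c)) := by
    exact Filter.Tendsto.add (hpow.mul_const _) tendsto_const_nhds
  simpa using this
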